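/- Let X be a set, U0 a sample space with probability measure Pr, f: X → ℝ, h a cost function, 𝒴(x,u) feasible sets, and ε ∈ (0,1). Define O as the optimal value of the chance-constrained problem min_{x∈X, η} f(x) + η subject to Pr[min_{y∈𝒴(x,u)} h(y) ≤ η] ≥ 1 − ε, and for any uncertainty set 𝒰 ⊆ U0 define O_𝒰 as the optimal value of min_{x∈X} { f(x) + max_{u∈𝒰} min_{y∈𝒴(x,u)} h(y) }. For x ∈ X let O_x := f(x) + min{ η : Pr[min_{y∈𝒴(x,u)} h(y) ≤ η] ≥ 1 − ε }. If 𝒰 satisfies Pr[u ∈ 𝒰] ≥ 1 − ε and (x*,η*) and x_𝒰* are optimal for the two problems respectively, then O = O_{x*} ≤ O_{x_𝒰*} ≤ O_𝒰. -/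

import Mathlib

open MeasureTheory

/-- Lemma 1, part 1: with a chance-constrained optimum `(x*, η*)` and a robust
optimum `x𝒰*` over an uncertainty set `𝒰` with `Pr[u ∈ 𝒰] ≥ 1 - ε`,
we have `O = O_{x*} ≤ O_{x𝒰*} ≤ O_𝒰`. -/
theorem stmt_0
    {U : Type*} [MeasurableSpace U] (P : Measure U) [IsProbabilityMeasure P]
    {X : Type*} (f : X → ℝ) (φ : X → U → ℝ)
    (ε : ℝ) (hε : ε ∈ Set.Ioo (0 : ℝ) 1)
    (𝒰 : Set U) (h𝒰 : ENNReal.ofReal (1 - ε) ≤ P 𝒰)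
    -- worst-case second-stage cost, attained for every x
    (g : X → ℝ) (hg : ∀ x, IsGreatest ((φ x) '' 𝒰) (g x))
    -- (1-ε)-quantile of the second-stage cost, attained for every x
    (q : X → ℝ)
    (hq : ∀ x, IsLeast {η : ℝ | ENNReal.ofReal (1 - ε) ≤ P {u | φ x u ≤ η}} (q x))
    -- optimal value and solution of the chance-constrained problem
    (O : ℝ) (xstar : X) (ηstar : ℝ)
    (hO : IsLeast {v : ℝ | ∃ x η, ENNReal.ofReal (1 - ε) ≤ P {u | φ x u ≤ η} ∧
      v = f x + η} O)
    (hOatt : ENNReal.ofReal (1 - ε) ≤ P {u | φ xstar u ≤ ηstar} ∧ O = f xstar + ηstar)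
    -- optimal value and solution of the robust problem
    (OU : ℝ) (xU : X)
    (hOU : IsLeast (Set.range fun x => f x + g x) OU)
    (hOUatt : OU = f xU + g xU)
    -- performance measures O_x := f x + q x
    (Oxstar OxU : ℝ)
    (hOxstar : Oxstar = f xstar + q xstar) (hOxU : OxU = f xU + q xU) :
    O = Oxstar ∧ Oxstar ≤ OxU ∧ OxU ≤ OU := by
  -- q x is feasible for the chance constraint, so O ≤ f x + q x for each x
  have hfeas : ∀ x, O ≤ f x + q x := fun x =>
    hO.2 ⟨x, q x, (hq x).1, rfl⟩
  have h1 : O = Oxstar := by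
    have hle : Oxstar ≤ O := by
      rw [hOxstar, hOatt.2]
      exact add_le_add_right ((hq xstar).2 hOatt.1) _
    exact le_antisymm (hOxstar ▸ hfeas xstar) hle
  have h2 : Oxstar ≤ OxU := h1 ▸ (hOxU ▸ hfeas xU)
  have h3 : OxU ≤ OU := by
    rw [hOxU, hOUatt]
    refine add_le_add_right ((hq xU).2 ?_) _
    refine le_trans h𝒰 (measure_mono fun u hu => ?_)
    exact (hg xU).2 ⟨u, hu, rfl⟩
  exact ⟨h1, h2, h3⟩
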